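/- Let A = (α, μ, β) be a P-finite automaton of dimension n over Σ and let S ⊆ ℚ[x]^n be a finite generating set of the backward module of A. Then f_A is identically zero if and only if α·v(1) = 0 for every v ∈ S, where v(1) ∈ ℚ^n denotes the vector obtained by evaluating every entry of v at x = 1. -/

import Mathlib

open Polynomial Matrix

/-- Substitute `x + k` for `x` in a polynomial. -/
noncomputable def shiftP (k : ℕ) (p : Polynomial ℚ) : Polynomial ℚ :=
  p.comp (Polynomial.X + Polynomial.C (k : ℚ))

/-- The extension of the transition map `μ` of a P-finite automaton to words:
`μ(σ₁⋯σₖ)(x) = μ(σ₁)(x)·μ(σ₂)(x+1)⋯μ(σₖ)(x+k-1)`, so that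
`μ(ε)(x) = I` and `μ(wσ)(x) = μ(w)(x)·μ(σ)(x+|w|)`. -/
noncomputable def muWord {S ι : Type*} [Fintype ι] [DecidableEq ι]
    (μ : S → Matrix ι ι (Polynomial ℚ)) (w : List S) : Matrix ι ι (Polynomial ℚ) :=
  (w.zipIdx.map (fun p => (μ p.1).map (shiftP p.2))).prod

/-- The function computed by the P-finite automaton `(α, μ, β)`:
`f_A(w) = α·μ(w,1)·β(|w|+1)`. -/
noncomputable def fAut {S ι : Type*} [Fintype ι] [DecidableEq ι]
    (α : ι → ℚ) (μ : S → Matrix ι ι (Polynomial ℚ)) (β : ι → Polynomial ℚ)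
    (w : List S) : ℚ :=
  α ⬝ᵥ ((muWord μ w).map (Polynomial.eval (1 : ℚ))).mulVec
      (fun i => (β i).eval ((w.length : ℚ) + 1))

/-- The backward function of a P-finite automaton: `B_A(u)(x) = μ(u)(x)·β(x+|u|)`. -/
noncomputable def backF {S ι : Type*} [Fintype ι] [DecidableEq ι]
    (μ : S → Matrix ι ι (Polynomial ℚ)) (β : ι → Polynomial ℚ)
    (w : List S) : ι → Polynomial ℚ :=
  (muWord μ w).mulVec (fun i => shiftP w.length (β i))

/-- The set of vectors `v` with `α ⬝ᵥ v(1) = 0` is a `ℚ[x]`-submodule. -/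
noncomputable def evalKer (n : ℕ) (α : Fin n → ℚ) :
    Submodule (Polynomial ℚ) (Fin n → Polynomial ℚ) where
  carrier := {v | (α ⬝ᵥ fun i => (v i).eval (1 : ℚ)) = 0}
  add_mem' := by
    intro a b ha hb
    simp only [Set.mem_setOf_eq] at *
    have : (fun i => ((a + b) i).eval (1 : ℚ))
        = (fun i => (a i).eval (1 : ℚ)) + fun i => (b i).eval (1 : ℚ) := by
      funext i; simp
    rw [this, dotProduct_add, ha, hb, add_zero]
  zero_mem' := by
    simp only [Set.mem_setOf_eq]
    have : (fun i : Fin n => ((0 : Fin n → Polynomial ℚ) i).eval (1 : ℚ)) = 0 := by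
      funext i; simp
    rw [this, dotProduct_zero]
  smul_mem' := by
    intro p v hv
    simp only [Set.mem_setOf_eq] at *
    have : (fun i => ((p • v) i).eval (1 : ℚ))
        = p.eval 1 • fun i => (v i).eval (1 : ℚ) := by
      funext i; simp [mul_comm]
    rw [this, dotProduct_smul, hv, smul_zero]

lemma fAut_eq_back {S : Type*} {n : ℕ} (α : Fin n → ℚ)
    (μ : S → Matrix (Fin n) (Fin n) (Polynomial ℚ)) (β : Fin n → Polynomial ℚ)
    (w : List S) :
    fAut α μ β w = α ⬝ᵥ fun i => ((backF μ β w) i).eval (1 : ℚ) := by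
  unfold fAut backF
  congr 1
  funext i
  simp [Matrix.mulVec, dotProduct, shiftP, eval_finset_sum, add_comm]

/-- If `G` is a finite generating set of the backward module of a
P-finite automaton `A = (α, μ, β)`, then `f_A ≡ 0` iff `α·v(1) = 0` for every `v ∈ G`. -/
theorem zeroness_iff_orthogonal_to_backward_generators
    {S : Type*} [Fintype S] (n : ℕ)
    (α : Fin n → ℚ) (μ : S → Matrix (Fin n) (Fin n) (Polynomial ℚ))
    (β : Fin n → Polynomial ℚ)
    (G : Finset (Fin n → Polynomial ℚ))
    (hG : Submodule.span (Polynomial ℚ) (G : Set (Fin n → Polynomial ℚ))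
        = Submodule.span (Polynomial ℚ) (Set.range (backF μ β))) :
    (∀ w : List S, fAut α μ β w = 0) ↔
      (∀ v ∈ G, (α ⬝ᵥ fun i => (v i).eval (1 : ℚ)) = 0) := by
  constructor
  · intro h v hv
    have hsub : Submodule.span (Polynomial ℚ) (Set.range (backF μ β)) ≤ evalKer n α := by
      rw [Submodule.span_le]
      rintro _ ⟨w, rfl⟩
      have hw := h w
      rw [fAut_eq_back] at hw
      exact hw
    exact hsub (hG ▸ Submodule.subset_span hv)
  · intro h w
    rw [fAut_eq_back]
    have hsub : Submodule.span (Polynomial ℚ) (G : Set (Fin n → Polynomial ℚ)) ≤ evalKer n α :=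
      Submodule.span_le.mpr h
    exact hsub (hG.symm ▸ Submodule.subset_span ⟨w, rfl⟩)
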